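/- Let (M, m) be a measure space and for each x ∈ M let {B_n(x)}_{n≥1} and {C_n(x)}_{n≥1} be two sequences of measurable sets of positive finite measure. Suppose there exist k ∈ ℕ and D > 0 such that for all x and all n ≥ k: B_{n+k}(x) ⊆ C_n(x) ⊆ B_{n−k}(x) and m(B_{n+k}(x))/m(B_n(x)) ≥ D. Then for every measurable set X and every x: lim_{n→∞} m(X ∩ C_n(x))/m(C_n(x)) = 1 if and only if lim_{n→∞} m(X ∩ B_n(x))/m(B_n(x)) = 1. -/

import Mathlib

open MeasureTheory Filter

private lemma dens_iff_aux {M : Type*} [MeasurableSpace M] (m : Measure M)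
    (A : ℕ → Set M) (hpos : ∀ n, 0 < m (A n)) (hfin : ∀ n, m (A n) < ⊤)
    (X : Set M) (hX : MeasurableSet X) :
    Tendsto (fun n => m (X ∩ A n) / m (A n)) atTop (nhds 1) ↔
      Tendsto (fun n => m (A n \ X) / m (A n)) atTop (nhds 0) := by
  have key : ∀ n, m (X ∩ A n) / m (A n) + m (A n \ X) / m (A n) = 1 := by
    intro n
    rw [ENNReal.div_add_div_same, Set.inter_comm, measure_inter_add_diff _ hX,
      ENNReal.div_self (hpos n).ne' (hfin n).ne]
  have hant : ∀ n, m (X ∩ A n) / m (A n) ≠ ⊤ := fun n =>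
    (ENNReal.div_lt_top (ne_top_of_le_ne_top (hfin n).ne
      (measure_mono Set.inter_subset_right)) (hpos n).ne').ne
  have hbnt : ∀ n, m (A n \ X) / m (A n) ≠ ⊤ := fun n =>
    (ENNReal.div_lt_top (ne_top_of_le_ne_top (hfin n).ne
      (measure_mono Set.diff_subset)) (hpos n).ne').ne
  constructor
  · intro h
    have heq : ∀ n, m (A n \ X) / m (A n) = 1 - m (X ∩ A n) / m (A n) := by
      intro n
      rw [← key n, ENNReal.add_sub_cancel_left (hant n)]
    simp only [heq]
    have := ENNReal.Tendsto.sub (tendsto_const_nhds (x := (1 : ENNReal))) h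
      (Or.inl ENNReal.one_ne_top)
    simpa using this
  · intro h
    have heq : ∀ n, m (X ∩ A n) / m (A n) = 1 - m (A n \ X) / m (A n) := by
      intro n
      rw [← key n, ENNReal.add_sub_cancel_right (hbnt n)]
    simp only [heq]
    have := ENNReal.Tendsto.sub (tendsto_const_nhds (x := (1 : ENNReal))) h
      (Or.inl ENNReal.one_ne_top)
    simpa using this

private lemma transfer_aux {M : Type*} [MeasurableSpace M] (m : Measure M) (X : Set M)
    (P Q : ℕ → Set M) (hPpos : ∀ n, 0 < m (P n)) (hQpos : ∀ n, 0 < m (Q n))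
    (c : ENNReal) (hc : c ≠ 0)
    (hsub : ∀ᶠ n in atTop, P n ⊆ Q n ∧ c * m (Q n) ≤ m (P n))
    (h : Tendsto (fun n => m (Q n \ X) / m (Q n)) atTop (nhds 0)) :
    Tendsto (fun n => m (P n \ X) / m (P n)) atTop (nhds 0) := by
  have hup : Tendsto (fun n => c⁻¹ * (m (Q n \ X) / m (Q n))) atTop (nhds 0) := by
    have := ENNReal.Tendsto.const_mul h (Or.inr (ENNReal.inv_ne_top.mpr hc))
    simpa using this
  refine tendsto_of_tendsto_of_tendsto_of_le_of_le' tendsto_const_nhds hup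
    (Eventually.of_forall fun n => zero_le) ?_
  filter_upwards [hsub] with n hn
  calc m (P n \ X) / m (P n) ≤ m (Q n \ X) / (c * m (Q n)) :=
        ENNReal.div_le_div (measure_mono (Set.diff_subset_diff_left hn.1)) hn.2
    _ = c⁻¹ * (m (Q n \ X) / m (Q n)) := by
        rw [div_eq_mul_inv, ENNReal.mul_inv (a := c) (b := m (Q n)) (Or.inl hc) (Or.inr (hQpos n).ne'), div_eq_mul_inv]
        ring

theorem vitali_equiv_of_nested {M : Type*} [MeasurableSpace M] (m : Measure M)
    (B C : M → ℕ → Set M)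
    (hBm : ∀ x n, MeasurableSet (B x n)) (hCm : ∀ x n, MeasurableSet (C x n))
    (hBpos : ∀ x n, 0 < m (B x n)) (hBfin : ∀ x n, m (B x n) < ⊤)
    (hCpos : ∀ x n, 0 < m (C x n)) (hCfin : ∀ x n, m (C x n) < ⊤)
    (k : ℕ) (D : ENNReal) (hD : 0 < D)
    (hnest : ∀ x : M, ∀ n : ℕ, k ≤ n →
      B x (n + k) ⊆ C x n ∧ C x n ⊆ B x (n - k) ∧ D ≤ m (B x (n + k)) / m (B x n)) :
    ∀ X : Set M, MeasurableSet X → ∀ x : M,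
      (Tendsto (fun n : ℕ => m (X ∩ C x n) / m (C x n)) atTop (nhds 1) ↔
        Tendsto (fun n : ℕ => m (X ∩ B x n) / m (B x n)) atTop (nhds 1)) := by
  intro X hX x
  -- convert D-ratio hypothesis to multiplicative form
  have hmul : ∀ n : ℕ, k ≤ n → D * m (B x n) ≤ m (B x (n + k)) := by
    intro n hn
    have := (hnest x n hn).2.2
    exact (ENNReal.le_div_iff_mul_le (Or.inl (hBpos x n).ne')
      (Or.inl (hBfin x n).ne)).mp this
  have hDD : (D * D) ≠ 0 := mul_ne_zero hD.ne' hD.ne'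
  rw [dens_iff_aux m (fun n => C x n) (fun n => hCpos x n) (fun n => hCfin x n) X hX,
    dens_iff_aux m (fun n => B x n) (fun n => hBpos x n) (fun n => hBfin x n) X hX]
  constructor
  · intro h
    refine transfer_aux m X _ (fun n => C x (n - k)) (fun n => hBpos x n) (fun n => hCpos x (n - k)) (D * D) hDD ?_
      (h.comp (tendsto_sub_atTop_nat k))
    filter_upwards [eventually_ge_atTop (3 * k)] with n hn
    have hk1 : k ≤ n - k := by omega
    have hk2 : k ≤ n - k - k := by omega
    have e1 : n - k + k = n := by omega
    have e2 : n - k - k + k = n - k := by omega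
    constructor
    · have := (hnest x (n - k) hk1).1
      rwa [e1] at this
    · calc D * D * m (C x (n - k)) ≤ D * D * m (B x (n - k - k)) := by
            exact mul_le_mul_right (measure_mono (hnest x (n - k) hk1).2.1) _
        _ = D * (D * m (B x (n - k - k))) := by ring
        _ ≤ D * m (B x (n - k - k + k)) := mul_le_mul_right (hmul _ hk2) _
        _ = D * m (B x (n - k)) := by rw [e2]
        _ ≤ m (B x (n - k + k)) := hmul _ hk1
        _ = m (B x n) := by rw [e1]
  · intro h
    refine transfer_aux m X _ (fun n => B x (n - k)) (fun n => hCpos x n) (fun n => hBpos x (n - k)) (D * D) hDD ?_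
      (h.comp (tendsto_sub_atTop_nat k))
    filter_upwards [eventually_ge_atTop (2 * k)] with n hn
    have hk0 : k ≤ n := by omega
    have hk1 : k ≤ n - k := by omega
    have e1 : n - k + k = n := by omega
    refine ⟨(hnest x n hk0).2.1, ?_⟩
    calc D * D * m (B x (n - k)) = D * (D * m (B x (n - k))) := by ring
      _ ≤ D * m (B x (n - k + k)) := mul_le_mul_right (hmul _ hk1) _
      _ = D * m (B x n) := by rw [e1]
      _ ≤ m (B x (n + k)) := hmul _ hk0
      _ ≤ m (C x n) := measure_mono (hnest x n hk0).1
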